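/- Let (A, ⋆) be a finite-dimensional algebra with F-linear involution over an algebraically closed field F with char F ≠ 2, and let x ∈ U(A) be conjugate to x⁻¹ in A. Then there exists y ∈ U(A) with y x y⁻¹ = x⁻¹ and y⁴ = 1. -/

import Mathlib

open Polynomial

private lemma sqrt_aux {R : Type*} [CommRing R] (two : IsUnit (2 : R)) :
    ∀ (m : ℕ) (a c : R), IsUnit a → (a ^ 2 - c) ^ (2 ^ m) = 0 → ∃ w, w ^ 2 = c := by
  intro m
  induction m with
  | zero =>
    intro a c ha h
    rw [pow_zero, pow_one] at h
    exact ⟨a, by linear_combination h⟩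
  | succ m ih =>
    intro a c ha h
    set d := a ^ 2 - c with hd
    have h1 : a * ↑ha.unit⁻¹ = 1 := by
      nth_rewrite 1 [← IsUnit.unit_spec ha]
      exact Units.mul_inv _
    have h2' : (2 : R) * ↑two.unit⁻¹ = 1 := by
      nth_rewrite 1 [← IsUnit.unit_spec two]
      exact Units.mul_inv _
    have h2at : 2 * a * (↑ha.unit⁻¹ * ↑two.unit⁻¹) = 1 := by
      calc 2 * a * (↑ha.unit⁻¹ * ↑two.unit⁻¹)
          = ((2 : R) * ↑two.unit⁻¹) * (a * ↑ha.unit⁻¹) := by ring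
        _ = 1 := by rw [h1, h2']; ring
    set t : R := ↑ha.unit⁻¹ * ↑two.unit⁻¹ with ht
    set b := a - d * t with hb
    have hbc : b ^ 2 - c = (d * t) ^ 2 := by
      have e1 : b ^ 2 - c = (a ^ 2 - c) - (2 * a * t) * d + (d * t) ^ 2 := by
        rw [hb]; ring
      rw [e1, h2at, ← hd]; ring
    have hb0 : (b ^ 2 - c) ^ (2 ^ m) = 0 := by
      have e : (2 : ℕ) ^ (m + 1) = 2 * 2 ^ m := by rw [pow_succ]; ring
      rw [e] at h
      rw [hbc, ← pow_mul, mul_pow, h, zero_mul]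
    have hdt : IsNilpotent (↑ha.unit⁻¹ * (d * t)) := by
      refine ⟨2 ^ (m + 1), ?_⟩
      rw [mul_pow, mul_pow, h]; ring
    have hbu : IsUnit b := by
      have h3 : b = a * (1 - ↑ha.unit⁻¹ * (d * t)) := by
        rw [mul_sub, mul_one, ← mul_assoc, h1, one_mul, hb]
      rw [h3]
      exact ha.mul (IsNilpotent.isUnit_one_sub hdt)
    exact ih b c hbu hb0

private lemma idem_pow {R : Type*} [Monoid R] {e : R} (he : e * e = e) :
    ∀ m, 1 ≤ m → e ^ m = e := by
  intro m
  induction m with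
  | zero => intro h; omega
  | succ m ih =>
    intro _
    rcases Nat.eq_zero_or_pos m with hm | hm
    · subst hm; rw [pow_one]
    · rw [pow_succ, ih hm, he]
private lemma sqrt_idem {F : Type*} [Field F] [IsAlgClosed F] (h2 : (2 : F) ≠ 0)
    {R : Type*} [CommRing R] [Algebra F R] :
    ∀ (n : ℕ) (p : F[X]), p.natDegree ≤ n → p.coeff 0 ≠ 0 →
      ∀ (e u : R), e * e = e → (aeval u p) * e = 0 → ∃ w, w * w = u * e ∧ w * e = w := by
  have two : IsUnit (2 : R) := by
    have h : (2 : R) = algebraMap F R 2 := by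
      rw [map_ofNat]
    rw [h]
    exact (isUnit_iff_ne_zero.mpr h2).map _
  have cancel : ∀ (c : F) (r : R), c ≠ 0 → r * algebraMap F R c = 0 → r = 0 := by
    intro c r hc h
    have h' := congrArg (· * algebraMap F R c⁻¹) h
    simpa [mul_assoc, ← map_mul, mul_inv_cancel₀ hc] using h'
  intro n
  induction n with
  | zero =>
    intro p hdeg h0 e u he hpe
    have hp : p = C (p.coeff 0) := Polynomial.eq_C_of_natDegree_le_zero hdeg
    rw [hp, aeval_C] at hpe
    have he0 : e = 0 := by
      apply cancel _ _ h0
      rw [mul_comm] at hpe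
      exact hpe
    exact ⟨0, by simp [he0]⟩
  | succ n ih =>
    intro p hdeg h0 e u he hpe
    by_cases hn : p.natDegree ≤ n
    · exact ih p hn h0 e u he hpe
    have hdeg' : p.natDegree = n + 1 := by omega
    have hp0 : p ≠ 0 := fun h => h0 (by simp [h])
    have hdne : p.degree ≠ 0 := by
      rw [degree_eq_natDegree hp0]
      exact_mod_cast (by omega : p.natDegree ≠ 0)
    obtain ⟨lam, hroot⟩ := IsAlgClosed.exists_root p hdne
    have hlam : lam ≠ 0 := by
      rintro rfl
      exact h0 (by rwa [Polynomial.coeff_zero_eq_eval_zero])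
    obtain ⟨q, hfac, hndvd⟩ := p.exists_eq_pow_rootMultiplicity_mul_and_not_dvd hp0 lam
    set m := p.rootMultiplicity lam with hm
    have hm1 : 1 ≤ m := (Polynomial.rootMultiplicity_pos hp0).mpr hroot
    have hq0 : q ≠ 0 := by
      rintro rfl
      rw [mul_zero] at hfac
      exact hp0 hfac
    have hqlam : q.eval lam ≠ 0 := fun h => hndvd (Polynomial.dvd_iff_isRoot.mpr h)
    have hdq : p.natDegree = m + q.natDegree := by
      rw [hfac, natDegree_mul (pow_ne_zero _ (X_sub_C_ne_zero lam)) hq0, natDegree_pow,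
        natDegree_X_sub_C, mul_one]
    have hq00 : q.coeff 0 ≠ 0 := by
      intro h
      apply h0
      rw [Polynomial.coeff_zero_eq_eval_zero, hfac, eval_mul,
        ← Polynomial.coeff_zero_eq_eval_zero q, h, mul_zero]
    by_cases hqd : q.natDegree = 0
    · -- base case: (u - lam)^m * e = 0 up to a unit
      have hqC : q = C (q.coeff 0) := Polynomial.eq_C_of_natDegree_le_zero (le_of_eq hqd)
      have key : (u - algebraMap F R lam) ^ m * e = 0 := by
        apply cancel (q.coeff 0) _ hq00
        have haep : aeval u p = (u - algebraMap F R lam) ^ m * algebraMap F R (q.coeff 0) := by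
          conv_lhs => rw [hfac, map_mul, map_pow, map_sub, aeval_X, aeval_C]
          conv_lhs => rw [hqC, aeval_C]
        calc (u - algebraMap F R lam) ^ m * e * algebraMap F R (q.coeff 0)
            = ((u - algebraMap F R lam) ^ m * algebraMap F R (q.coeff 0)) * e := by ring
          _ = aeval u p * e := by rw [haep]
          _ = 0 := hpe
      set n' : R := (u - algebraMap F R lam) * e with hn'def
      have hnm : n' ^ m = 0 := by
        rw [hn'def, mul_pow, idem_pow he m hm1]
        exact key
      have hn2 : ((1:R) ^ 2 - (1 + lam⁻¹ • n')) ^ (2 ^ m) = 0 := by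
        have hval : (1:R) ^ 2 - (1 + lam⁻¹ • n') = (-lam⁻¹) • n' := by
          rw [one_pow, neg_smul]
          abel
        rw [hval, _root_.smul_pow]
        have hle : m ≤ 2 ^ m := Nat.le_of_lt (Nat.lt_two_pow_self (n := m))
        have : n' ^ 2 ^ m = n' ^ m * n' ^ (2 ^ m - m) := by
          rw [← pow_add]
          congr 1
          omega
        rw [this, hnm, zero_mul, smul_zero]
      obtain ⟨W, hW⟩ := sqrt_aux two m 1 (1 + lam⁻¹ • n') isUnit_one hn2
      obtain ⟨mu, hmu⟩ := IsAlgClosed.exists_pow_nat_eq lam (n := 2) (by norm_num)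
      refine ⟨mu • (W * e), ?_, ?_⟩
      · have step : (mu • (W * e)) * (mu • (W * e)) = (mu * mu) • (W ^ 2 * e) := by
          rw [smul_mul_smul_comm]
          congr 1
          calc W * e * (W * e) = W ^ 2 * (e * e) := by ring
            _ = W ^ 2 * e := by rw [he]
        rw [step, hW]
        have hmm : mu * mu = lam := by rw [← hmu]; ring
        rw [hmm]
        calc lam • ((1 + lam⁻¹ • n') * e) = lam • (e + lam⁻¹ • (n' * e)) := by
              rw [add_mul, one_mul, smul_mul_assoc]
          _ = lam • e + (lam * lam⁻¹) • (n' * e) := by rw [smul_add, smul_smul]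
          _ = lam • e + n' * e := by rw [mul_inv_cancel₀ hlam, one_smul]
          _ = lam • e + (u - algebraMap F R lam) * e := by
              rw [hn'def, mul_assoc, he]
          _ = u * e := by
              rw [sub_mul, Algebra.smul_def]
              ring
      · rw [smul_mul_assoc, mul_assoc, he]
    · -- recursive case
      have hqd1 : 1 ≤ q.natDegree := by omega
      have hcop : IsCoprime ((X - C lam) ^ m) q :=
        ((Polynomial.irreducible_X_sub_C lam).coprime_iff_not_dvd.mpr hndvd).pow_left
      obtain ⟨al, be, hbez⟩ := hcop
      set e1 : R := aeval u (al * (X - C lam) ^ m) * e with he1def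
      set e2 : R := aeval u (be * q) * e with he2def
      have hsum : e1 + e2 = e := by
        rw [he1def, he2def, ← add_mul, ← map_add, hbez, map_one, one_mul]
      have hprod : e1 * e2 = 0 := by
        have hpoly : al * (X - C lam) ^ m * (be * q) = al * be * p := by
          rw [hfac]; ring
        calc e1 * e2 = aeval u (al * (X - C lam) ^ m) * aeval u (be * q) * (e * e) := by
              rw [he1def, he2def]; ring
          _ = aeval u (al * be * p) * e := by rw [← map_mul, hpoly, he]
          _ = aeval u (al * be) * (aeval u p * e) := by rw [map_mul, mul_assoc]
          _ = 0 := by rw [hpe, mul_zero]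
      have he1e : e1 * e = e1 := by rw [he1def, mul_assoc, he]
      have he2e : e2 * e = e2 := by rw [he2def, mul_assoc, he]
      have he1 : e1 * e1 = e1 := by
        have h' : e1 * e1 = e1 * (e1 + e2) - e1 * e2 := by ring
        rw [h', hsum, hprod, sub_zero, he1e]
      have he2' : e2 * e2 = e2 := by
        have h' : e2 * e2 = (e1 + e2) * e2 - e1 * e2 := by ring
        rw [h', hsum, hprod, sub_zero, mul_comm]
        exact he2e
      have hv1 : aeval u q * e1 = 0 := by
        have h' : aeval u q * e1 = aeval u al * (aeval u p * e) := by
          rw [he1def, hfac]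
          simp only [map_mul]
          ring
        rw [h', hpe, mul_zero]
      have hv2 : aeval u ((X - C lam) ^ m) * e2 = 0 := by
        have h' : aeval u ((X - C lam) ^ m) * e2 = aeval u be * (aeval u p * e) := by
          rw [he2def, hfac]
          simp only [map_mul]
          ring
        rw [h', hpe, mul_zero]
      have hXc : ((X - C lam) ^ m).coeff 0 ≠ 0 := by
        rw [Polynomial.coeff_zero_eq_eval_zero, eval_pow, eval_sub, eval_X, eval_C]
        exact pow_ne_zero _ (by simpa using hlam)
      obtain ⟨w1, hw1, hw1e⟩ := ih q (by omega) hq00 e1 u he1 hv1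
      obtain ⟨w2, hw2, hw2e⟩ := ih ((X - C lam) ^ m)
        (by rw [natDegree_pow, natDegree_X_sub_C, mul_one]; omega) hXc e2 u he2' hv2
      refine ⟨w1 + w2, ?_, ?_⟩
      · have hw12 : w1 * w2 = 0 := by
          rw [← hw1e, ← hw2e]
          calc w1 * e1 * (w2 * e2) = w1 * w2 * (e1 * e2) := by ring
            _ = 0 := by rw [hprod, mul_zero]
        calc (w1 + w2) * (w1 + w2) = w1 * w1 + w2 * w2 + 2 * (w1 * w2) := by ring
          _ = u * e1 + u * e2 + 0 := by rw [hw1, hw2, hw12]; ring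
          _ = u * e := by rw [add_zero, ← mul_add, hsum]
      · rw [add_mul]
        rw [show w1 * e = w1 from by rw [← hw1e, mul_assoc, he1e, hw1e]]
        rw [show w2 * e = w2 from by rw [← hw2e, mul_assoc, he2e, hw2e]]
private lemma exists_sqrt_adjoin {F : Type*} [Field F] [IsAlgClosed F] (h2 : (2 : F) ≠ 0)
    {A : Type*} [Ring A] [Algebra F A] [FiniteDimensional F A] (r : Aˣ) :
    ∃ w : A, w ∈ Algebra.adjoin F {(r : A)} ∧ w * w = (r : A) := by
  set R := Algebra.adjoin F {(r : A)} with hR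
  have hrmem : (r : A) ∈ R := Algebra.self_mem_adjoin_singleton F _
  set u : R := ⟨(r : A), hrmem⟩ with hu
  have hint : IsIntegral F (r : A) := IsIntegral.of_finite F _
  set p := minpoly F (r : A) with hp
  have hpne : p ≠ 0 := minpoly.ne_zero hint
  have h00 : p.coeff 0 ≠ 0 := by
    intro hc
    obtain ⟨t, ht⟩ := Polynomial.X_dvd_iff.mpr hc
    have hmono : t.Monic := monic_X.of_mul_monic_left (ht ▸ minpoly.monic hint)
    have haev : aeval (r : A) t = 0 := by
      have h1 : aeval (r : A) p = 0 := minpoly.aeval F _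
      rw [ht, map_mul, aeval_X] at h1
      have h2' := congrArg (fun z => (↑r⁻¹ : A) * z) h1
      simpa [← mul_assoc] using h2'
    have hlt := minpoly.min F (r : A) hmono haev
    have htne : t ≠ 0 := hmono.ne_zero
    have hdeg : (X * t).natDegree = 1 + t.natDegree := by
      rw [natDegree_mul X_ne_zero htne, natDegree_X]
    have hnat := natDegree_le_natDegree hlt
    rw [← hp, ht, hdeg] at hnat
    omega
  have haevu : (aeval u p) = 0 := by
    have hval : (Subalgebra.val R) (aeval u p) = 0 := by
      rw [← Polynomial.aeval_algHom_apply, hp]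
      exact minpoly.aeval F (r : A)
    exact Subtype.ext hval
  obtain ⟨w, hw1, _⟩ := sqrt_idem h2 p.natDegree p le_rfl h00 1 u (mul_one 1)
    (by rw [haevu, zero_mul])
  rw [mul_one] at hw1
  refine ⟨(w : A), w.2, ?_⟩
  have := congrArg (Subtype.val) hw1
  simpa using this
theorem unitary_conj_order_four {F : Type*} [Field F] [IsAlgClosed F] (h2 : (2 : F) ≠ 0)
    {A : Type*} [Ring A] [Algebra F A] [FiniteDimensional F A]
    (s : A →ₗ[F] A) (hmul : ∀ a b : A, s (a * b) = s b * s a) (hinv : ∀ a : A, s (s a) = a)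
    (x : Aˣ) (hx : s (x : A) * (x : A) = 1)
    (h : ∃ z : Aˣ, (z : A) * (x : A) * (↑z⁻¹ : A) = (↑x⁻¹ : A)) :
    ∃ y : Aˣ, s (y : A) * (y : A) = 1 ∧ (y : A) * (x : A) * (↑y⁻¹ : A) = (↑x⁻¹ : A) ∧
      y ^ 4 = 1 := by
  obtain ⟨z, hz⟩ := h
  -- basic facts about s
  have s1 : s (1 : A) = 1 := by
    have h1 := hmul (s 1) 1
    rw [mul_one, hinv] at h1
    rw [mul_one] at h1
    exact h1.symm
  have spow : ∀ (a : A) (n : ℕ), s (a ^ n) = s a ^ n := by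
    intro a n
    induction n with
    | zero => simpa using s1
    | succ n ihn => rw [pow_succ, hmul, ihn, ← pow_succ']
  have s_aeval : ∀ (r : A) (q : F[X]), s (aeval r q) = aeval (s r) q := by
    intro r q
    induction q using Polynomial.induction_on with
    | C a =>
      rw [aeval_C, aeval_C, Algebra.algebraMap_eq_smul_one, map_smul, s1]
    | add p q hp hq => rw [map_add, map_add, map_add, hp, hq]
    | monomial n a _ =>
      have e1 : ∀ t : A, aeval t (C a * X ^ (n + 1)) = a • t ^ (n + 1) := by
        intro t
        rw [map_mul, aeval_C, map_pow, aeval_X, Algebra.smul_def]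
      rw [e1, e1, map_smul, spow]
  -- commuting with adjoin elements
  have adj_comm : ∀ (r t w : A), w ∈ Algebra.adjoin F {r} → r * t = t * r → w * t = t * w := by
    intro r t w hw hrt
    have hle : Algebra.adjoin F {r} ≤ Subalgebra.centralizer F {t} := by
      apply Algebra.adjoin_le
      intro a ha
      rw [Set.mem_singleton_iff] at ha
      subst ha
      simp only [SetLike.mem_coe, Subalgebra.mem_centralizer_iff]
      intro g hg
      rw [Set.mem_singleton_iff] at hg
      subst hg
      exact hrt.symm
    have hmem := hle hw
    rw [Subalgebra.mem_centralizer_iff] at hmem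
    exact (hmem t rfl).symm
  have comm_inv : ∀ (W : Aˣ) (w : A), w * ↑W = ↑W * w → w * ↑W⁻¹ = ↑W⁻¹ * w := by
    intro W w hw
    calc w * ↑W⁻¹ = ↑W⁻¹ * (↑W * w) * ↑W⁻¹ := by rw [Units.inv_mul_cancel_left]
      _ = ↑W⁻¹ * (w * ↑W) * ↑W⁻¹ := by rw [hw]
      _ = ↑W⁻¹ * (w * (↑W * ↑W⁻¹)) := by rw [mul_assoc, mul_assoc]
      _ = ↑W⁻¹ * w := by rw [Units.mul_inv, mul_one]
  have sWpair : ∀ W : Aˣ, s ↑W * s (↑W⁻¹ : A) = 1 ∧ s (↑W⁻¹ : A) * s ↑W = 1 := by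
    intro W
    constructor
    · rw [← hmul, Units.inv_mul]
      exact s1
    · rw [← hmul, Units.mul_inv]
      exact s1
  have s_inv : ∀ W : Aˣ, s ↑W = ↑W → s (↑W⁻¹ : A) = ↑W⁻¹ := by
    intro W hW
    have h1 : s (↑W⁻¹ : A) * ↑W = 1 := by
      rw [← hW]
      exact (sWpair W).2
    calc s (↑W⁻¹ : A) = s ↑W⁻¹ * (↑W * ↑W⁻¹) := by rw [Units.mul_inv, mul_one]
      _ = (s ↑W⁻¹ * ↑W) * ↑W⁻¹ := by rw [mul_assoc]
      _ = ↑W⁻¹ := by rw [h1, one_mul]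
  have conj_facts : ∀ w : Aˣ, (↑w * ↑x * (↑w⁻¹ : A) = ↑x⁻¹) →
      (↑w * ↑x = (↑x⁻¹ : A) * ↑w ∧ ↑w * (↑x⁻¹ : A) = ↑x * ↑w) := by
    intro w hw
    have h1 : (↑w : A) * ↑x = (↑x⁻¹ : A) * ↑w := by
      have h' := congrArg (fun t => t * (↑w : A)) hw
      rwa [Units.inv_mul_cancel_right] at h'
    have h3 : (↑x : A) * (↑w * ↑x) = ↑w := by
      rw [h1, ← mul_assoc, Units.mul_inv, one_mul]
    have h4 := congrArg (fun t => t * (↑x⁻¹ : A)) h3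
    rw [← mul_assoc, mul_assoc (↑x * ↑w : A), Units.mul_inv, mul_one] at h4
    exact ⟨h1, h4.symm⟩
  have sx : s ↑x = (↑x⁻¹ : A) := by
    calc s ↑x = s ↑x * (↑x * ↑x⁻¹) := by rw [Units.mul_inv, mul_one]
      _ = (s ↑x * ↑x) * ↑x⁻¹ := by rw [mul_assoc]
      _ = ↑x⁻¹ := by rw [hx, one_mul]
  have sxinv : s (↑x⁻¹ : A) = ↑x := by rw [← sx, hinv]
  -- the symmetric element b = z * s z
  have hz1 := (conj_facts z hz).1
  have hz2 := (conj_facts z hz).2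
  have hA : (↑x⁻¹ : A) * s ↑z = s ↑z * ↑x := by
    have h' := congrArg s hz1
    rw [hmul, hmul, sx, sxinv] at h'
    exact h'
  let SZ : Aˣ := ⟨s ↑z, s (↑z⁻¹ : A), (sWpair z).1, (sWpair z).2⟩
  let Bu : Aˣ := z * SZ
  have hBuval : (↑Bu : A) = ↑z * s ↑z := rfl
  have hsb : s (↑Bu : A) = ↑Bu := by
    rw [hBuval, hmul, hinv]
  have hBx : (↑Bu : A) * ↑x = ↑x * ↑Bu := by
    rw [hBuval]
    calc ↑z * s ↑z * ↑x = ↑z * (s ↑z * ↑x) := by rw [mul_assoc]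
      _ = ↑z * ((↑x⁻¹ : A) * s ↑z) := by rw [← hA]
      _ = (↑z * (↑x⁻¹ : A)) * s ↑z := by rw [mul_assoc]
      _ = (↑x * ↑z) * s ↑z := by rw [hz2]
      _ = ↑x * (↑z * s ↑z) := by rw [mul_assoc]
  -- square root c of b
  obtain ⟨c, hcmem, hc2⟩ := exists_sqrt_adjoin h2 Bu
  have hsc : s c = c := by
    have hcmem' := hcmem
    rw [Algebra.adjoin_singleton_eq_range_aeval] at hcmem'
    obtain ⟨qc, hqc⟩ := hcmem'
    rw [← hqc]
    show s (aeval (↑Bu : A) qc) = aeval (↑Bu : A) qc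
    rw [s_aeval, hsb]
  have hcx : c * ↑x = ↑x * c := adj_comm _ _ _ hcmem hBx
  have hcB : c * ↑Bu = ↑Bu * c := adj_comm _ _ _ hcmem rfl
  have hcBinv : c * ↑Bu⁻¹ = ↑Bu⁻¹ * c := comm_inv Bu c hcB
  let Cu : Aˣ := ⟨c, c * ↑Bu⁻¹,
    by rw [← mul_assoc, hc2, Units.mul_inv],
    by rw [mul_assoc, ← hcBinv, ← mul_assoc, hc2, Units.mul_inv]⟩
  have hCuval : (↑Cu : A) = c := rfl
  have hCu2 : Cu * Cu = Bu := Units.ext hc2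
  -- the unitary conjugator y
  let y : Aˣ := Cu⁻¹ * z
  have hsyv : s ↑y = (↑y⁻¹ : A) := by
    have hscinv : s (↑Cu⁻¹ : A) = ↑Cu⁻¹ := s_inv Cu hsc
    have h1 : s (↑y : A) = ↑(SZ * Cu⁻¹) := by
      show s (↑Cu⁻¹ * ↑z : A) = ↑SZ * ↑Cu⁻¹
      rw [hmul, hscinv]
    rw [h1]
    congr 1
    have hSZ : SZ = z⁻¹ * (Cu * Cu) := by
      rw [hCu2]
      exact (eq_inv_mul_iff_mul_eq.mpr rfl)
    show SZ * Cu⁻¹ = (Cu⁻¹ * z)⁻¹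
    rw [mul_inv_rev, inv_inv, hSZ]
    group
  have hsy : s ↑y * ↑y = 1 := by rw [hsyv, Units.inv_mul]
  have hyx : (↑y : A) * ↑x * ↑y⁻¹ = ↑x⁻¹ := by
    have hcxinv : c * (↑x⁻¹ : A) = ↑x⁻¹ * c := comm_inv x c hcx
    have h1 : (↑y : A) * ↑x * ↑y⁻¹ = ↑Cu⁻¹ * (↑z * ↑x * ↑z⁻¹) * ↑Cu := by
      show (↑Cu⁻¹ * ↑z : A) * ↑x * (↑z⁻¹ * ↑Cu) = _
      rw [mul_assoc, mul_assoc, mul_assoc, mul_assoc, mul_assoc]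
    rw [h1, hz]
    calc (↑Cu⁻¹ : A) * ↑x⁻¹ * ↑Cu = ↑Cu⁻¹ * (↑x⁻¹ * c) := by rw [mul_assoc, hCuval]
      _ = ↑Cu⁻¹ * (c * ↑x⁻¹) := by rw [← hcxinv]
      _ = (↑Cu⁻¹ * ↑Cu) * ↑x⁻¹ := by rw [← mul_assoc, hCuval]
      _ = ↑x⁻¹ := by rw [Units.inv_mul, one_mul]
  -- the element u = y^2 and its square root v
  have hy1 := (conj_facts y hyx).1
  have hy2 := (conj_facts y hyx).2
  let u : Aˣ := y ^ 2
  have huval : (↑u : A) = ↑y * ↑y := by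
    show (↑(y ^ 2) : A) = ↑y * ↑y
    rw [sq, Units.val_mul]
  have hux : (↑u : A) * ↑x = ↑x * ↑u := by
    rw [huval]
    calc ↑y * ↑y * ↑x = ↑y * (↑y * ↑x) := by rw [mul_assoc]
      _ = ↑y * ((↑x⁻¹ : A) * ↑y) := by rw [hy1]
      _ = (↑y * (↑x⁻¹ : A)) * ↑y := by rw [mul_assoc]
      _ = (↑x * ↑y) * ↑y := by rw [hy2]
      _ = ↑x * (↑y * ↑y) := by rw [mul_assoc]
  have huy : (↑u : A) * ↑y = ↑y * ↑u := by
    rw [huval, mul_assoc]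
  have hsu : s ↑u = (↑u⁻¹ : A) := by
    have h' : u⁻¹ = y⁻¹ * y⁻¹ := by rw [show u = y ^ 2 from rfl, sq, mul_inv_rev]
    rw [huval, hmul, hsyv, h', Units.val_mul]
  obtain ⟨v, hvmem, hv2⟩ := exists_sqrt_adjoin h2 u
  have hvx : v * ↑x = ↑x * v := adj_comm _ _ _ hvmem hux
  have hvy : v * ↑y = ↑y * v := adj_comm _ _ _ hvmem huy
  have hvu : v * ↑u = ↑u * v := adj_comm _ _ _ hvmem rfl
  have hvuinv : v * ↑u⁻¹ = ↑u⁻¹ * v := comm_inv u v hvu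
  let Vu : Aˣ := ⟨v, v * ↑u⁻¹,
    by rw [← mul_assoc, hv2, Units.mul_inv],
    by rw [mul_assoc, ← hvuinv, ← mul_assoc, hv2, Units.mul_inv]⟩
  have hVu2 : Vu * Vu = u := Units.ext hv2
  -- s v lies in the adjoin of u⁻¹
  have hvmem' := hvmem
  rw [Algebra.adjoin_singleton_eq_range_aeval] at hvmem'
  obtain ⟨qv, hqv⟩ := hvmem'
  have hsvrep : s v = aeval (↑u⁻¹ : A) qv := by
    rw [← hqv]
    show s (aeval (↑u : A) qv) = _
    rw [s_aeval, hsu]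
  have hsvmem : s v ∈ Algebra.adjoin F {(↑u⁻¹ : A)} := by
    rw [hsvrep]
    exact Polynomial.aeval_mem_adjoin_singleton F _
  have huix : (↑u⁻¹ : A) * ↑x = ↑x * ↑u⁻¹ := (comm_inv u ↑x hux.symm).symm
  have huiy : (↑u⁻¹ : A) * ↑y = ↑y * ↑u⁻¹ := (comm_inv u ↑y huy.symm).symm
  have huiv : (↑u⁻¹ : A) * v = v * ↑u⁻¹ := hvuinv.symm
  have hsvx : s v * ↑x = ↑x * s v := adj_comm _ _ _ hsvmem huix
  have hsvy : s v * ↑y = ↑y * s v := adj_comm _ _ _ hsvmem huiy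
  have hsvv : s v * v = v * s v := adj_comm _ _ _ hsvmem huiv
  -- the involution-symmetric square-one element e
  set e : A := s v * v with hedef
  have he2 : e * e = 1 := by
    have h1 : e * e = (s v * s v) * (v * v) := by
      rw [hedef]
      calc s v * v * (s v * v) = s v * (v * s v) * v := by
            rw [mul_assoc, mul_assoc, mul_assoc]
        _ = s v * (s v * v) * v := by rw [← hsvv]
        _ = (s v * s v) * (v * v) := by rw [← mul_assoc, ← mul_assoc, mul_assoc]
    rw [h1, ← hmul, hv2, hsu, Units.inv_mul]
  have hse : s e = e := by rw [hedef, hmul, hinv]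
  have mul_comm_comp : ∀ a b t : A, a * t = t * a → b * t = t * b →
      (a * b) * t = t * (a * b) := by
    intro a b t h1 h2'
    calc a * b * t = a * (b * t) := by rw [mul_assoc]
      _ = a * (t * b) := by rw [h2']
      _ = (a * t) * b := by rw [mul_assoc]
      _ = (t * a) * b := by rw [h1]
      _ = t * (a * b) := by rw [mul_assoc]
  have hex : e * ↑x = ↑x * e := by
    rw [hedef]; exact mul_comm_comp _ _ _ hsvx hvx
  have hey : e * ↑y = ↑y * e := by
    rw [hedef]; exact mul_comm_comp _ _ _ hsvy hvy
  have hev : e * v = v * e := by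
    rw [hedef]; exact mul_comm_comp _ _ _ hsvv rfl
  -- a square root g of e
  obtain ⟨im, him⟩ := IsAlgClosed.exists_pow_nat_eq (-1 : F) (n := 2) (by norm_num)
  set g : A := (2⁻¹ : F) • ((1 + e) + im • (1 - e)) with hgdef
  have ha1 : (1 + e) * (1 + e) = 1 + e + e + 1 := by
    have h' : (1 + e) * (1 + e) = 1 + e + e + e * e := by noncomm_ring
    rw [h', he2]
  have ha2 : (1 + e) * (1 - e) = 0 := by
    have h' : (1 + e) * (1 - e) = 1 - e * e := by noncomm_ring
    rw [h', he2, sub_self]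
  have ha3 : (1 - e) * (1 + e) = 0 := by
    have h' : (1 - e) * (1 + e) = 1 - e * e := by noncomm_ring
    rw [h', he2, sub_self]
  have ha4 : (1 - e) * (1 - e) = 1 - e - e + 1 := by
    have h' : (1 - e) * (1 - e) = 1 - e - e + e * e := by noncomm_ring
    rw [h', he2]
  have himm : im * im = -1 := by rw [← him]; ring
  obtain ⟨pa, hpa⟩ : ∃ t : A, t = 1 + e := ⟨_, rfl⟩
  obtain ⟨pb, hpb⟩ : ∃ t : A, t = 1 - e := ⟨_, rfl⟩
  have ha1' : pa * pa = 1 + e + e + 1 := by rw [hpa]; exact ha1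
  have ha2' : pa * pb = 0 := by rw [hpa, hpb]; exact ha2
  have ha3' : pb * pa = 0 := by rw [hpa, hpb]; exact ha3
  have ha4' : pb * pb = 1 - e - e + 1 := by rw [hpb]; exact ha4
  have hg2 : g * g = e := by
    rw [hgdef, ← hpa, ← hpb, smul_mul_assoc, mul_smul_comm, smul_smul]
    have hexpand : (pa + im • pb) * (pa + im • pb)
        = pa * pa + im • (pa * pb) + im • (pb * pa)
          + (im * im) • (pb * pb) := by
      simp only [mul_add, add_mul, smul_mul_assoc, mul_smul_comm, smul_smul, smul_add]
      abel
    rw [hexpand, ha1', ha2', ha3', ha4', himm, smul_zero, add_zero, add_zero]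
    have hinner : (1 + e + e + 1) + (-1 : F) • (1 - e - e + 1) = e + e + e + e := by
      rw [neg_smul, one_smul]
      abel
    rw [hinner]
    have h4e : e + e + e + e = (4 : F) • e := by
      rw [show (4 : F) = 1 + 1 + 1 + 1 from by norm_num, add_smul, add_smul, add_smul,
        one_smul]
    rw [h4e, smul_smul]
    have h22 : (2⁻¹ : F) * 2 = 1 := inv_mul_cancel₀ h2
    have h14 : (2⁻¹ : F) * 2⁻¹ * 4 = 1 := by
      calc (2⁻¹ : F) * 2⁻¹ * 4 = ((2⁻¹ : F) * 2) * ((2⁻¹ : F) * 2) := by ring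
        _ = 1 := by rw [h22, mul_one]
    rw [h14, one_smul]
  have hgcomm : ∀ t : A, e * t = t * e → g * t = t * g := by
    intro t het
    have h1 : (1 + e) * t = t * (1 + e) := by
      rw [add_mul, mul_add, one_mul, mul_one, het]
    have h1' : (1 - e) * t = t * (1 - e) := by
      rw [sub_mul, mul_sub, one_mul, mul_one, het]
    rw [hgdef, smul_mul_assoc, mul_smul_comm]
    congr 1
    rw [add_mul, mul_add, smul_mul_assoc, mul_smul_comm, h1, h1']
  have hge : g * e = e * g := hgcomm e rfl
  have hgx : g * ↑x = ↑x * g := hgcomm ↑x hex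
  have hgy : g * ↑y = ↑y * g := hgcomm ↑y hey
  have hgv : g * v = v * g := hgcomm v hev
  have hsg : s g = g := by
    rw [hgdef]
    simp only [map_smul, map_add, map_sub, s1, hse]
  let G : Aˣ := ⟨g, e * g,
    by rw [← mul_assoc, hge, mul_assoc, hg2, he2],
    by rw [mul_assoc, hg2, he2]⟩
  let E : Aˣ := ⟨e, e, he2, he2⟩
  have hG2 : G * G = E := Units.ext hg2
  have hE2 : E * E = 1 := Units.ext he2
  have hEinv : E⁻¹ = E := inv_eq_of_mul_eq_one_right hE2
  -- the final unit
  let Y2 : Aˣ := y * Vu⁻¹ * G⁻¹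
  have hsG : s (↑G⁻¹ : A) = ↑G⁻¹ := s_inv G hsg
  have hY2val : (↑Y2 : A) = ↑y * ↑Vu⁻¹ * ↑G⁻¹ := by
    rw [show Y2 = y * Vu⁻¹ * G⁻¹ from rfl, Units.val_mul, Units.val_mul]
  have hsY2' : s ↑Y2 = ↑G⁻¹ * (s (↑Vu⁻¹ : A) * s ↑y) := by
    rw [hY2val, mul_assoc, hmul, hmul, hsG, mul_assoc]
  have hpair1 : s v * s (↑Vu⁻¹ : A) = 1 := (sWpair Vu).1
  have key2 : s (↑Vu⁻¹ : A) * ↑Vu⁻¹ = e := by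
    have hv_sv : v * s v = e := by rw [hedef]; exact hsvv.symm
    have h1 : e * (s (↑Vu⁻¹ : A) * ↑Vu⁻¹) = 1 := by
      rw [← hv_sv]
      calc v * s v * (s (↑Vu⁻¹ : A) * ↑Vu⁻¹)
          = v * ((s v * s (↑Vu⁻¹ : A)) * ↑Vu⁻¹) := by simp only [mul_assoc]
        _ = v * ↑Vu⁻¹ := by rw [hpair1, one_mul]
        _ = 1 := Units.mul_inv Vu
    calc s (↑Vu⁻¹ : A) * ↑Vu⁻¹
        = (e * e) * (s (↑Vu⁻¹ : A) * ↑Vu⁻¹) := by rw [he2, one_mul]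
      _ = e * (e * (s (↑Vu⁻¹ : A) * ↑Vu⁻¹)) := by rw [mul_assoc]
      _ = e := by rw [h1, mul_one]
  refine ⟨Y2, ?_, ?_, ?_⟩
  · have hGi : (↑G⁻¹ : A) = e * g := rfl
    calc s ↑Y2 * ↑Y2
        = ↑G⁻¹ * (s (↑Vu⁻¹ : A) * (s ↑y * (↑y * (↑Vu⁻¹ * ↑G⁻¹)))) := by
          rw [hsY2', hY2val]
          simp only [mul_assoc]
      _ = ↑G⁻¹ * (s (↑Vu⁻¹ : A) * (↑Vu⁻¹ * ↑G⁻¹)) := by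
          rw [← mul_assoc (s (↑y : A)), hsy, one_mul]
      _ = ↑G⁻¹ * (e * ↑G⁻¹) := by
          rw [← mul_assoc (s (↑Vu⁻¹ : A)) (↑Vu⁻¹ : A) (↑G⁻¹ : A), key2]
      _ = (e * g) * ((e * e) * g) := by rw [hGi]; simp only [mul_assoc]
      _ = (e * g) * g := by rw [he2, one_mul]
      _ = e * (g * g) := by rw [mul_assoc]
      _ = e * e := by rw [hg2]
      _ = 1 := he2
  · have mid : ∀ (W : Aˣ) (t w : A), t * ↑W = ↑W * t →
        (↑W⁻¹ : A) * (t * (↑W * w)) = t * w := by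
      intro W t w hc
      calc (↑W⁻¹ : A) * (t * (↑W * w)) = (↑W⁻¹ * (t * ↑W)) * w := by
            rw [mul_assoc, mul_assoc]
        _ = (↑W⁻¹ * (↑W * t)) * w := by rw [hc]
        _ = t * w := by rw [Units.inv_mul_cancel_left]
    have hY2inv : (↑Y2⁻¹ : A) = ↑G * (↑Vu * ↑y⁻¹) := by
      show (↑((y * Vu⁻¹ * G⁻¹)⁻¹) : A) = _
      rw [mul_inv_rev, mul_inv_rev, inv_inv, inv_inv, Units.val_mul, Units.val_mul]
    have hmain : (↑Y2 : A) * ↑x * ↑Y2⁻¹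
        = ↑y * (↑Vu⁻¹ * (↑G⁻¹ * (↑x * (↑G * (↑Vu * ↑y⁻¹))))) := by
      rw [hY2val, hY2inv]
      simp only [mul_assoc]
    rw [hmain, mid G ↑x _ hgx.symm, mid Vu ↑x _ hvx.symm, ← mul_assoc]
    exact hyx
  · have c1 : Commute y Vu := Units.ext (by
      show (↑y : A) * v = v * ↑y
      exact hvy.symm)
    have c2 : Commute y G := Units.ext (by
      show (↑y : A) * g = g * ↑y
      exact hgy.symm)
    have c3 : Commute Vu G := Units.ext (by
      show v * g = g * v
      exact hgv.symm)
    have cyVi : Commute y Vu⁻¹ := c1.inv_right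
    have cyGi : Commute y G⁻¹ := c2.inv_right
    have cVG : Commute Vu⁻¹ G⁻¹ := (c3.inv_left).inv_right
    have cPG : Commute (y * Vu⁻¹) G⁻¹ := Commute.mul_left cyGi cVG
    have hY22 : Y2 * Y2 = E⁻¹ := by
      have e1 : Y2 ^ 2 = (y * Vu⁻¹) ^ 2 * (G⁻¹) ^ 2 := cPG.mul_pow 2
      have e2 : (y * Vu⁻¹) ^ 2 = y ^ 2 * (Vu⁻¹) ^ 2 := cyVi.mul_pow 2
      have e3 : (Vu⁻¹) ^ 2 = u⁻¹ := by
        rw [inv_pow, show Vu ^ 2 = u from by rw [sq]; exact hVu2]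
      have e4 : (G⁻¹) ^ 2 = E⁻¹ := by
        rw [inv_pow, show G ^ 2 = E from by rw [sq]; exact hG2]
      calc Y2 * Y2 = Y2 ^ 2 := (sq Y2).symm
        _ = y ^ 2 * (Vu⁻¹) ^ 2 * (G⁻¹) ^ 2 := by rw [e1, e2]
        _ = u * u⁻¹ * E⁻¹ := by rw [e3, e4]
        _ = E⁻¹ := by group
    calc Y2 ^ 4 = Y2 ^ 2 * Y2 ^ 2 := by rw [← pow_add]
      _ = (Y2 * Y2) * (Y2 * Y2) := by rw [sq]
      _ = E⁻¹ * E⁻¹ := by rw [hY22]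
      _ = E * E := by rw [hEinv]
      _ = 1 := hE2
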